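/- (Lemma 6 on minimum node distance, node-to-node form.) Let n ≥ 2 and let X₁,…,Xₙ be independent random points, each uniformly distributed on the square [0,√n] × [0,√n] ⊆ ℝ² (a square of area n). Then for every ε > 0, the probability that there exist distinct indices i ≠ j with Euclidean distance ‖Xᵢ − Xⱼ‖ ≤ n^{−(1/2+ε)} is at most (π/2)·n^{−2ε}; equivalently, with probability at least 1 − (π/2)·n^{−2ε} the minimum distance between any two of the n points exceeds 1/n^{1/2+ε}. -/

import Mathlib

open MeasureTheory ProbabilityTheory Real
open scoped ENNReal NNReal

/-- The square `[0, √n] × [0, √n]` of area `n` in the Euclidean plane. -/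
def networkSquare (n : ℕ) : Set (EuclideanSpace ℝ (Fin 2)) :=
  {x | ∀ i, x i ∈ Set.Icc (0 : ℝ) (Real.sqrt n)}

lemma networkSquare_eq (n : ℕ) : networkSquare n =
    (MeasurableEquiv.toLp 2 (Fin 2 → ℝ)).symm ⁻¹'
      (Set.univ.pi fun _ => Set.Icc (0:ℝ) (Real.sqrt n)) := by
  ext x
  simp [networkSquare, Set.mem_pi, MeasurableEquiv.toLp, Pi.le_def, forall_and]
  exact Iff.rfl

lemma volume_networkSquare (n : ℕ) : volume (networkSquare n) = n := by
  rw [networkSquare_eq,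
    (EuclideanSpace.volume_preserving_symm_measurableEquiv_toLp (Fin 2)).measure_preimage
      ((MeasurableSet.univ_pi fun _ => measurableSet_Icc).nullMeasurableSet)]
  rw [volume_pi_pi]
  simp only [Real.volume_Icc, sub_zero, Finset.prod_const, Finset.card_univ, Fintype.card_fin]
  rw [← ENNReal.ofReal_pow (Real.sqrt_nonneg _), Real.sq_sqrt (by positivity)]
  simp

noncomputable def unifSq (n : ℕ) : Measure (EuclideanSpace ℝ (Fin 2)) :=
  (volume (networkSquare n))⁻¹ • volume.restrict (networkSquare n)

lemma unifSq_isProb (n : ℕ) (hn : 1 ≤ n) : IsProbabilityMeasure (unifSq n) := by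
  constructor
  rw [unifSq, Measure.smul_apply, Measure.restrict_apply_univ, volume_networkSquare,
    smul_eq_mul, ENNReal.inv_mul_cancel]
  · exact Nat.cast_ne_zero.mpr (by omega)
  · exact ENNReal.natCast_ne_top n

lemma unifSq_closedBall (n : ℕ) (x : EuclideanSpace ℝ (Fin 2)) (r : ℝ) :
    unifSq n (Metric.closedBall x r) ≤ ENNReal.ofReal (π * r ^ 2) / n := by
  have hvol : volume (Metric.closedBall x r) ≤ ENNReal.ofReal (π * r ^ 2) := by
    rcases le_or_gt 0 r with hr | hr
    · rw [EuclideanSpace.volume_closedBall]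
      simp only [Fintype.card_fin]
      rw [Real.sq_sqrt Real.pi_nonneg]
      norm_num [Real.Gamma_two]
      rw [← ENNReal.ofReal_pow hr, ← ENNReal.ofReal_mul (by positivity)]
      exact le_of_eq (by ring_nf)
    · rw [Metric.closedBall_eq_empty.mpr hr]
      simp
  rw [unifSq, volume_networkSquare, Measure.smul_apply, smul_eq_mul,
    Measure.restrict_apply measurableSet_closedBall]
  calc (n : ℝ≥0∞)⁻¹ * volume (Metric.closedBall x r ∩ networkSquare n)
      ≤ (n : ℝ≥0∞)⁻¹ * volume (Metric.closedBall x r) :=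
        mul_le_mul_right (measure_mono Set.inter_subset_left) _
    _ ≤ (n : ℝ≥0∞)⁻¹ * ENNReal.ofReal (π * r ^ 2) := mul_le_mul_right hvol _
    _ = ENNReal.ofReal (π * r ^ 2) / n := by rw [div_eq_mul_inv, mul_comm]

lemma pair_prob {Ω : Type*} [MeasurableSpace Ω] (μ : Measure Ω) [IsProbabilityMeasure μ]
    (n : ℕ) (hn : 1 ≤ n) (f g : Ω → EuclideanSpace ℝ (Fin 2))
    (hf : Measurable f) (hg : Measurable g) (hfg : IndepFun f g μ)
    (hlf : μ.map f = unifSq n) (hlg : μ.map g = unifSq n) (r : ℝ) :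
    μ {ω | dist (f ω) (g ω) ≤ r} ≤ ENNReal.ofReal (π * r ^ 2) / n := by
  have hprob := unifSq_isProb n hn
  have hmap : μ.map (fun ω => (f ω, g ω)) = (unifSq n).prod (unifSq n) := by
    have h := (indepFun_iff_map_prod_eq_prod_map_map hf.aemeasurable hg.aemeasurable).mp hfg
    rwa [hlf, hlg] at h
  have hS : MeasurableSet
      {p : EuclideanSpace ℝ (Fin 2) × EuclideanSpace ℝ (Fin 2) | dist p.1 p.2 ≤ r} :=
    measurableSet_le continuous_dist.measurable measurable_const
  have heq : μ {ω | dist (f ω) (g ω) ≤ r}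
      = ((unifSq n).prod (unifSq n)) {p | dist p.1 p.2 ≤ r} := by
    rw [← hmap, Measure.map_apply (hf.prodMk hg) hS]
    rfl
  rw [heq, Measure.prod_apply hS]
  have hkey : ∀ x, unifSq n (Prod.mk x ⁻¹' {p | dist p.1 p.2 ≤ r})
      ≤ ENNReal.ofReal (π * r ^ 2) / n := by
    intro x
    have hpre : Prod.mk x ⁻¹' {p : EuclideanSpace ℝ (Fin 2) × EuclideanSpace ℝ (Fin 2) |
        dist p.1 p.2 ≤ r} = Metric.closedBall x r := by
      ext y; simp [Metric.mem_closedBall, dist_comm]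
    rw [hpre]
    exact unifSq_closedBall n x r
  calc ∫⁻ x, unifSq n (Prod.mk x ⁻¹' {p | dist p.1 p.2 ≤ r}) ∂(unifSq n)
      ≤ ∫⁻ _, ENNReal.ofReal (π * r ^ 2) / n ∂(unifSq n) := lintegral_mono hkey
    _ = ENNReal.ofReal (π * r ^ 2) / n := by simp

lemma card_lt_pairs_le (n : ℕ) :
    2 * (Finset.univ.filter (fun p : Fin n × Fin n => p.1 < p.2)).card ≤ n ^ 2 := by
  set s := Finset.univ.filter (fun p : Fin n × Fin n => p.1 < p.2) with hs
  set t := Finset.univ.filter (fun p : Fin n × Fin n => p.2 < p.1) with ht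
  have hst : t = s.image Prod.swap := by
    ext p
    simp only [hs, ht, Finset.mem_image, Finset.mem_filter, Finset.mem_univ, true_and]
    constructor
    · intro h; exact ⟨(p.2, p.1), h, rfl⟩
    · rintro ⟨⟨a, b⟩, h, rfl⟩; exact h
  have hcard : t.card = s.card := by
    rw [hst, Finset.card_image_of_injective _ Prod.swap_injective]
  have hdisj : Disjoint s t := by
    rw [Finset.disjoint_left]
    intro p hp hq
    simp only [hs, ht, Finset.mem_filter, Finset.mem_univ, true_and] at hp hq
    exact absurd hq (not_lt.mpr hp.le)
  calc 2 * s.card = s.card + t.card := by omega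
    _ = (s ∪ t).card := (Finset.card_union_of_disjoint hdisj).symm
    _ ≤ (Finset.univ : Finset (Fin n × Fin n)).card :=
        Finset.card_le_card (Finset.subset_univ _)
    _ = n ^ 2 := by simp [sq]

lemma real_comp (n : ℕ) (hn : 1 ≤ n) (ε : ℝ) :
    (n : ℝ) * (π * ((n : ℝ) ^ (-(1 / 2 + ε) : ℝ)) ^ 2) = π * (n : ℝ) ^ (-(2 * ε) : ℝ) := by
  have hn0 : (0 : ℝ) < n := by exact_mod_cast hn
  have h1 : ((n : ℝ) ^ (-(1 / 2 + ε) : ℝ)) ^ (2 : ℕ)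
      = (n : ℝ) ^ ((-(1 / 2 + ε)) * 2 : ℝ) := by
    rw [← Real.rpow_natCast ((n : ℝ) ^ (-(1 / 2 + ε) : ℝ)) 2, ← Real.rpow_mul hn0.le]
    norm_num
  rw [h1]
  have h2 : ((-(1 / 2 + ε)) * 2 : ℝ) + 1 = -(2 * ε) := by ring
  calc (n : ℝ) * (π * (n : ℝ) ^ ((-(1 / 2 + ε)) * 2 : ℝ))
      = π * ((n : ℝ) ^ ((-(1 / 2 + ε)) * 2 : ℝ) * (n : ℝ)) := by ring
    _ = π * (n : ℝ) ^ (((-(1 / 2 + ε)) * 2 : ℝ) + 1) := by rw [Real.rpow_add_one hn0.ne']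
    _ = π * (n : ℝ) ^ (-(2 * ε) : ℝ) := by rw [h2]

set_option maxHeartbeats 1000000 in
/-- Lemma 6 (node-to-node form): if `n ≥ 2` points are placed independently and
uniformly on a square of area `n`, then for every `ε > 0` the probability that two
distinct points are within distance `n^{-(1/2+ε)}` of each other is at most
`(π/2)·n^{-2ε}`. -/
theorem min_distance_lemma (n : ℕ) (hn : 2 ≤ n)
    {Ω : Type*} [MeasurableSpace Ω] (μ : Measure Ω) [IsProbabilityMeasure μ]
    (X : Fin n → Ω → EuclideanSpace ℝ (Fin 2)) (hmeas : ∀ i, Measurable (X i))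
    (hindep : iIndepFun X μ)
    (hlaw : ∀ i, Measure.map (X i) μ =
      (volume (networkSquare n))⁻¹ • volume.restrict (networkSquare n))
    (ε : ℝ) (hε : 0 < ε) :
    μ {ω | ∃ i j : Fin n, i ≠ j ∧
        dist (X i ω) (X j ω) ≤ (n : ℝ) ^ (-(1 / 2 + ε) : ℝ)} ≤
      ENNReal.ofReal ((π / 2) * (n : ℝ) ^ (-(2 * ε) : ℝ)) := by
  have hn1 : 1 ≤ n := le_trans (by norm_num) hn
  set r : ℝ := (n : ℝ) ^ (-(1 / 2 + ε) : ℝ) with hr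
  set c : ℝ≥0∞ := ENNReal.ofReal (π * r ^ 2) / n with hc
  set s := Finset.univ.filter (fun p : Fin n × Fin n => p.1 < p.2) with hsdef
  set A : Fin n × Fin n → Set Ω := fun p => {ω | dist (X p.1 ω) (X p.2 ω) ≤ r} with hA
  have hlaw' : ∀ i, Measure.map (X i) μ = unifSq n := by
    intro i; rw [unifSq]; exact hlaw i
  have hAbound : ∀ p ∈ s, μ (A p) ≤ c := by
    intro p hp
    simp only [hsdef, Finset.mem_filter, Finset.mem_univ, true_and] at hp
    exact pair_prob μ n hn1 (X p.1) (X p.2) (hmeas p.1) (hmeas p.2)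
      (hindep.indepFun hp.ne) (hlaw' p.1) (hlaw' p.2) r
  have hsub : {ω | ∃ i j : Fin n, i ≠ j ∧ dist (X i ω) (X j ω) ≤ r} ⊆ ⋃ p ∈ s, A p := by
    intro ω hω
    obtain ⟨i, j, hij, hd⟩ := hω
    rw [Set.mem_iUnion₂]
    rcases lt_or_gt_of_ne hij with h | h
    · refine ⟨(i, j), ?_, ?_⟩
      · exact Finset.mem_filter.mpr ⟨Finset.mem_univ _, h⟩
      · exact hd
    · refine ⟨(j, i), ?_, ?_⟩
      · exact Finset.mem_filter.mpr ⟨Finset.mem_univ _, h⟩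
      · show dist (X j ω) (X i ω) ≤ r
        rw [dist_comm]
        exact hd
  have hfinal : (s.card : ℝ≥0∞) * c ≤ ENNReal.ofReal ((π / 2) * (n : ℝ) ^ (-(2 * ε) : ℝ)) := by
    have hn0 : (n : ℝ≥0∞) ≠ 0 := Nat.cast_ne_zero.mpr (by omega)
    have hnt : (n : ℝ≥0∞) ≠ ⊤ := ENNReal.natCast_ne_top n
    rw [← ENNReal.mul_le_mul_iff_right (two_ne_zero) ENNReal.ofNat_ne_top]
    have hRHS : (2 : ℝ≥0∞) * ENNReal.ofReal ((π / 2) * (n : ℝ) ^ (-(2 * ε) : ℝ))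
        = ENNReal.ofReal (π * (n : ℝ) ^ (-(2 * ε) : ℝ)) := by
      rw [← ENNReal.ofReal_ofNat 2, ← ENNReal.ofReal_mul (by norm_num)]
      ring_nf
    rw [hRHS]
    calc (2 : ℝ≥0∞) * ((s.card : ℝ≥0∞) * c) = ((2 * s.card : ℕ) : ℝ≥0∞) * c := by
          push_cast; ring
      _ ≤ ((n ^ 2 : ℕ) : ℝ≥0∞) * c :=
          mul_le_mul_left (by exact_mod_cast Nat.cast_le.mpr (card_lt_pairs_le n)) _
      _ = (n : ℝ≥0∞) * ENNReal.ofReal (π * r ^ 2) := by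
          push_cast
          rw [hc, div_eq_mul_inv, sq]
          rw [mul_comm (ENNReal.ofReal (π * r ^ 2)) _, ← mul_assoc, mul_assoc _ (n : ℝ≥0∞) _,
            ENNReal.mul_inv_cancel hn0 hnt, mul_one]
      _ = ENNReal.ofReal ((n : ℝ) * (π * r ^ 2)) := by
          rw [← ENNReal.ofReal_natCast n, ← ENNReal.ofReal_mul (Nat.cast_nonneg n)]
      _ = ENNReal.ofReal (π * (n : ℝ) ^ (-(2 * ε) : ℝ)) := by
          rw [hr, real_comp n hn1 ε]
  calc μ {ω | ∃ i j : Fin n, i ≠ j ∧ dist (X i ω) (X j ω) ≤ r}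
      ≤ μ (⋃ p ∈ s, A p) := measure_mono hsub
    _ ≤ ∑ p ∈ s, μ (A p) := measure_biUnion_finset_le s A
    _ ≤ s.card • c := Finset.sum_le_card_nsmul s _ c hAbound
    _ = (s.card : ℝ≥0∞) * c := nsmul_eq_mul _ _
    _ ≤ ENNReal.ofReal ((π / 2) * (n : ℝ) ^ (-(2 * ε) : ℝ)) := hfinal
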